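/- Let u: ℝ² → ℝ² be twice continuously differentiable and ℤ²-periodic, and let φ: ℝ² → ℝ be continuously differentiable and ℤ²-periodic. Then ∫_{[0,1)²} φ · det Du dx = ½ ∫_{[0,1)²} (∇×φ) · j(u) dx, where ∇×φ = (∂_{x₂}φ, −∂_{x₁}φ) and det Du is the Jacobian determinant of u. -/

import Mathlib

noncomputable section

open MeasureTheory

/-- Partial derivative in the first coordinate direction. -/
def pd1 {E : Type*} [NormedAddCommGroup E] [NormedSpace ℝ E]
    (f : ℝ × ℝ → E) (x : ℝ × ℝ) : E := fderiv ℝ f x (1, 0)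

/-- Partial derivative in the second coordinate direction. -/
def pd2 {E : Type*} [NormedAddCommGroup E] [NormedSpace ℝ E]
    (f : ℝ × ℝ → E) (x : ℝ × ℝ) : E := fderiv ℝ f x (0, 1)

/-- Cross product of two planar vectors: `a × b = a¹b² − a²b¹`. -/
def cross (a b : ℝ × ℝ) : ℝ := a.1 * b.2 - a.2 * b.1

/-- The fundamental domain `[0,1)²` of the torus. -/
def fundSq : Set (ℝ × ℝ) := Set.Ico (0:ℝ) 1 ×ˢ Set.Ico (0:ℝ) 1

/-- Derivative of a periodic (under translation by `c`) differentiable function is periodic. -/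
theorem fderiv_shift {E : Type*} [NormedAddCommGroup E] [NormedSpace ℝ E]
    (f : ℝ × ℝ → E) (hf : Differentiable ℝ f) (c x : ℝ × ℝ) (h : ∀ y, f (y + c) = f y) :
    fderiv ℝ f (x + c) = fderiv ℝ f x := by
  have ht : HasFDerivAt (fun y : ℝ × ℝ => y + c) (ContinuousLinearMap.id ℝ (ℝ × ℝ)) x :=
    (hasFDerivAt_id x).add_const c
  have h2 : HasFDerivAt (fun y => f (y + c)) ((fderiv ℝ f (x + c)).comp
      (ContinuousLinearMap.id ℝ (ℝ × ℝ))) x := (hf (x + c)).hasFDerivAt.comp x ht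
  have h3 : (fun y => f (y + c)) = f := funext h
  rw [h3, ContinuousLinearMap.comp_id] at h2
  exact h2.fderiv.symm

/-- The divergence pointwise identity. -/
theorem div_identity (u : ℝ × ℝ → ℝ × ℝ) (φ : ℝ × ℝ → ℝ)
    (hu : ContDiff ℝ 2 u) (hφ : ContDiff ℝ 1 φ) (x : ℝ × ℝ) :
    pd1 (fun y => φ y * cross (u y) (pd2 u y)) x
      + pd2 (fun y => -(φ y * cross (u y) (pd1 u y))) x
    = 2 * (φ x * ((pd1 u x).1 * (pd2 u x).2 - (pd1 u x).2 * (pd2 u x).1))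
      - (pd2 φ x * cross (u x) (pd1 u x) + (-(pd1 φ x)) * cross (u x) (pd2 u x)) := by
  have hud : Differentiable ℝ u := hu.differentiable (by norm_num)
  have h1 : HasFDerivAt φ (fderiv ℝ φ x) x := (hφ.differentiable one_ne_zero x).hasFDerivAt
  have h2 : HasFDerivAt u (fderiv ℝ u x) x := (hud x).hasFDerivAt
  have hDu : ContDiff ℝ 1 (fderiv ℝ u) := hu.fderiv_right (by norm_num)
  have h3 : HasFDerivAt (fderiv ℝ u) (fderiv ℝ (fderiv ℝ u) x) x :=
    (hDu.differentiable one_ne_zero x).hasFDerivAt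
  set B := fderiv ℝ (fderiv ℝ u) x with hB
  have hp2 : HasFDerivAt (fun y => fderiv ℝ u y (0, 1))
      ((fderiv ℝ u x).comp (0 : ℝ × ℝ →L[ℝ] ℝ × ℝ) + B.flip ((0,1) : ℝ × ℝ)) x :=
    h3.clm_apply (hasFDerivAt_const _ _)
  have hp1 : HasFDerivAt (fun y => fderiv ℝ u y (1, 0))
      ((fderiv ℝ u x).comp (0 : ℝ × ℝ →L[ℝ] ℝ × ℝ) + B.flip ((1,0) : ℝ × ℝ)) x :=
    h3.clm_apply (hasFDerivAt_const _ _)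
  have hC2 : HasFDerivAt
      (fun y => (u y).1 * (fderiv ℝ u y (0,1)).2 - (u y).2 * (fderiv ℝ u y (0,1)).1) _ x :=
    ((h2.fst.mul hp2.snd).sub (h2.snd.mul hp2.fst))
  have hC1 : HasFDerivAt
      (fun y => (u y).1 * (fderiv ℝ u y (1,0)).2 - (u y).2 * (fderiv ℝ u y (1,0)).1) _ x :=
    ((h2.fst.mul hp1.snd).sub (h2.snd.mul hp1.fst))
  have hP : fderiv ℝ (fun y => φ y * ((u y).1 * (fderiv ℝ u y (0,1)).2 - (u y).2 * (fderiv ℝ u y (0,1)).1)) x = _ :=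
    (h1.mul hC2).fderiv
  have hQ : fderiv ℝ (fun y => -(φ y * ((u y).1 * (fderiv ℝ u y (1,0)).2 - (u y).2 * (fderiv ℝ u y (1,0)).1))) x = _ :=
    ((h1.mul hC1).neg).fderiv
  have hsymm : B (1,0) (0,1) = B (0,1) (1,0) :=
    second_derivative_symmetric (fun y => (hud y).hasFDerivAt) h3 _ _
  simp only [pd1, pd2, cross]
  rw [hP, hQ]
  simp only [ContinuousLinearMap.add_apply, ContinuousLinearMap.smul_apply,
    ContinuousLinearMap.comp_apply, ContinuousLinearMap.flip_apply,
    ContinuousLinearMap.coe_fst', ContinuousLinearMap.coe_snd',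
    ContinuousLinearMap.zero_apply, smul_eq_mul, ContinuousLinearMap.neg_apply,
    ContinuousLinearMap.sub_apply, map_zero, Prod.fst_zero, Prod.snd_zero]
  rw [hsymm]
  ring

theorem fundSq_ae_eq_Icc : fundSq =ᵐ[volume] Set.Icc ((0,0) : ℝ × ℝ) (1,1) := by
  rw [MeasureTheory.ae_eq_set]
  constructor
  · refine measure_mono_null (fun x hx => ?_) (measure_empty (μ := volume))
    rcases hx with ⟨⟨hx1, hx2⟩, hx3⟩
    exact hx3 ⟨⟨hx1.1, hx2.1⟩, ⟨hx1.2.le, hx2.2.le⟩⟩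
  · have hsub : Set.Icc ((0,0) : ℝ × ℝ) (1,1) \ fundSq ⊆
        ({(1:ℝ)} ×ˢ (Set.univ : Set ℝ)) ∪ ((Set.univ : Set ℝ) ×ˢ {(1:ℝ)}) := by
      rintro ⟨x, y⟩ ⟨⟨⟨hx0, hy0⟩, ⟨hx1, hy1⟩⟩, hn⟩
      rcases lt_or_ge x 1 with hx | hx
      · rcases lt_or_ge y 1 with hy | hy
        · exact absurd (⟨⟨hx0, hx⟩, ⟨hy0, hy⟩⟩ : (x, y) ∈ fundSq) hn
        · exact Or.inr ⟨trivial, le_antisymm hy1 hy⟩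
      · exact Or.inl ⟨le_antisymm hx1 hx, trivial⟩
    refine measure_mono_null hsub ?_
    refine measure_union_null ?_ ?_
    · rw [MeasureTheory.Measure.volume_eq_prod, MeasureTheory.Measure.prod_prod]
      simp
    · rw [MeasureTheory.Measure.volume_eq_prod, MeasureTheory.Measure.prod_prod]
      simp

theorem integral_jacobian_eq_half_integral_curl_dot_current
    (u : ℝ × ℝ → ℝ × ℝ) (φ : ℝ × ℝ → ℝ)
    (hu : ContDiff ℝ 2 u) (hφ : ContDiff ℝ 1 φ)
    (huper : ∀ x : ℝ × ℝ, u (x + (1, 0)) = u x ∧ u (x + (0, 1)) = u x)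
    (hφper : ∀ x : ℝ × ℝ, φ (x + (1, 0)) = φ x ∧ φ (x + (0, 1)) = φ x) :
    ∫ x in fundSq, φ x * ((pd1 u x).1 * (pd2 u x).2 - (pd1 u x).2 * (pd2 u x).1)
      = (1 / 2) * ∫ x in fundSq,
          (pd2 φ x * cross (u x) (pd1 u x) + (-(pd1 φ x)) * cross (u x) (pd2 u x)) := by
  have hud : Differentiable ℝ u := hu.differentiable (by norm_num)
  have hu1 : ContDiff ℝ 1 u := hu.of_le (by norm_num)
  have hDu : ContDiff ℝ 1 (fderiv ℝ u) := hu.fderiv_right (by norm_num)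
  -- P and Q
  set P : ℝ × ℝ → ℝ := fun y => φ y * cross (u y) (pd2 u y) with hPdef
  set Q : ℝ × ℝ → ℝ := fun y => -(φ y * cross (u y) (pd1 u y)) with hQdef
  have hpd1u : ContDiff ℝ 1 (pd1 u) := hDu.clm_apply contDiff_const
  have hpd2u : ContDiff ℝ 1 (pd2 u) := hDu.clm_apply contDiff_const
  have hPc : ContDiff ℝ 1 P :=
    hφ.mul ((hu1.fst.mul hpd2u.snd).sub (hu1.snd.mul hpd2u.fst))
  have hQc : ContDiff ℝ 1 Q :=
    (hφ.mul ((hu1.fst.mul hpd1u.snd).sub (hu1.snd.mul hpd1u.fst))).neg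
  -- periodicity of P and Q
  have hDuper : ∀ (c : ℝ × ℝ), (∀ y, u (y + c) = u y) → ∀ y, fderiv ℝ u (y + c) = fderiv ℝ u y :=
    fun c hc y => fderiv_shift u hud c y hc
  have hper10u : ∀ y, u (y + (1,0)) = u y := fun y => (huper y).1
  have hper01u : ∀ y, u (y + (0,1)) = u y := fun y => (huper y).2
  have hPper : ∀ (c : ℝ × ℝ), (∀ y, u (y + c) = u y) → (∀ y, φ (y + c) = φ y) →
      (∀ y, P (y + c) = P y) ∧ (∀ y, Q (y + c) = Q y) := by
    intro c hcu hcφ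
    constructor <;> intro y <;>
      simp only [hPdef, hQdef, pd1, pd2, hcu, hcφ, hDuper c hcu y]
  obtain ⟨hP10, hQ10⟩ := hPper (1,0) hper10u (fun y => (hφper y).1)
  obtain ⟨hP01, hQ01⟩ := hPper (0,1) hper01u (fun y => (hφper y).2)
  -- divergence theorem
  have hdiv : (∫ x in Set.Icc ((0,0) : ℝ × ℝ) (1,1),
      (fderiv ℝ P x (1,0) + fderiv ℝ Q x (0,1))) =
      (((∫ x in (0:ℝ)..1, Q (x, 1)) - ∫ x in (0:ℝ)..1, Q (x, 0)) +
          ∫ y in (0:ℝ)..1, P (1, y)) - ∫ y in (0:ℝ)..1, P (0, y) := by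
    apply integral_divergence_prod_Icc_of_hasFDerivAt_off_countable_of_le P Q
      (fderiv ℝ P) (fderiv ℝ Q) ((0,0) : ℝ × ℝ) (1,1) (by constructor <;> norm_num)
      ∅ Set.countable_empty
    · exact hPc.continuous.continuousOn
    · exact hQc.continuous.continuousOn
    · exact fun x _ => ((hPc.differentiable one_ne_zero) x).hasFDerivAt
    · exact fun x _ => ((hQc.differentiable one_ne_zero) x).hasFDerivAt
    · apply Continuous.integrableOn_Icc
      exact ((hPc.continuous_fderiv one_ne_zero).clm_apply continuous_const).add
        ((hQc.continuous_fderiv one_ne_zero).clm_apply continuous_const)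
  -- boundary terms vanish
  have hb1 : ∀ x : ℝ, Q (x, 1) = Q (x, 0) := by
    intro x
    have := hQ01 (x, 0)
    simpa using this
  have hb2 : ∀ y : ℝ, P (1, y) = P (0, y) := by
    intro y
    have := hP10 (0, y)
    simpa using this
  have hzero : (∫ x in Set.Icc ((0,0) : ℝ × ℝ) (1,1),
      (fderiv ℝ P x (1,0) + fderiv ℝ Q x (0,1))) = 0 := by
    rw [hdiv]
    simp only [hb1, hb2]
    ring
  -- divergence integrand pointwise equality
  have hkey : ∀ x : ℝ × ℝ, fderiv ℝ P x (1,0) + fderiv ℝ Q x (0,1)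
      = 2 * (φ x * ((pd1 u x).1 * (pd2 u x).2 - (pd1 u x).2 * (pd2 u x).1))
        - (pd2 φ x * cross (u x) (pd1 u x) + (-(pd1 φ x)) * cross (u x) (pd2 u x)) := by
    intro x
    exact div_identity u φ hu hφ x
  -- convert fundSq to Icc
  have hcongr : ∀ (f : ℝ × ℝ → ℝ), (∫ x in fundSq, f x)
      = ∫ x in Set.Icc ((0,0) : ℝ × ℝ) (1,1), f x :=
    fun f => setIntegral_congr_set fundSq_ae_eq_Icc
  -- integrability of the two integrands on Icc
  have hLc : Continuous (fun x => φ x * ((pd1 u x).1 * (pd2 u x).2 - (pd1 u x).2 * (pd2 u x).1)) :=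
    hφ.continuous.mul (((hpd1u.continuous.fst).mul (hpd2u.continuous.snd)).sub
      ((hpd1u.continuous.snd).mul (hpd2u.continuous.fst)))
  have hRc : Continuous (fun x =>
      pd2 φ x * cross (u x) (pd1 u x) + (-(pd1 φ x)) * cross (u x) (pd2 u x)) := by
    have hpd1φ : Continuous (pd1 φ) := (hφ.continuous_fderiv one_ne_zero).clm_apply continuous_const
    have hpd2φ : Continuous (pd2 φ) := (hφ.continuous_fderiv one_ne_zero).clm_apply continuous_const
    have hc1 : Continuous (fun x => cross (u x) (pd1 u x)) :=
      ((hu1.continuous.fst).mul (hpd1u.continuous.snd)).sub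
        ((hu1.continuous.snd).mul (hpd1u.continuous.fst))
    have hc2 : Continuous (fun x => cross (u x) (pd2 u x)) :=
      ((hu1.continuous.fst).mul (hpd2u.continuous.snd)).sub
        ((hu1.continuous.snd).mul (hpd2u.continuous.fst))
    exact (hpd2φ.mul hc1).add (hpd1φ.neg.mul hc2)
  have hLi : IntegrableOn (fun x => φ x * ((pd1 u x).1 * (pd2 u x).2
      - (pd1 u x).2 * (pd2 u x).1)) (Set.Icc ((0,0) : ℝ × ℝ) (1,1)) volume :=
    hLc.integrableOn_Icc
  have hRi : IntegrableOn (fun x =>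
      pd2 φ x * cross (u x) (pd1 u x) + (-(pd1 φ x)) * cross (u x) (pd2 u x))
      (Set.Icc ((0,0) : ℝ × ℝ) (1,1)) volume := hRc.integrableOn_Icc
  -- combine
  rw [hcongr, hcongr]
  have hsplit : (∫ x in Set.Icc ((0,0) : ℝ × ℝ) (1,1),
      (fderiv ℝ P x (1,0) + fderiv ℝ Q x (0,1)))
      = 2 * (∫ x in Set.Icc ((0,0) : ℝ × ℝ) (1,1),
          φ x * ((pd1 u x).1 * (pd2 u x).2 - (pd1 u x).2 * (pd2 u x).1))
        - ∫ x in Set.Icc ((0,0) : ℝ × ℝ) (1,1),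
          (pd2 φ x * cross (u x) (pd1 u x) + (-(pd1 φ x)) * cross (u x) (pd2 u x)) := by
    rw [← integral_const_mul, ← integral_sub ((hLi.const_mul 2)) hRi]
    exact setIntegral_congr_fun measurableSet_Icc (fun x _ => hkey x)
  rw [hzero] at hsplit
  linarith
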